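/- For a Lie algebroid E over M with a positive density μ on M and a positive E-density ν, the map s ↦ tr ad(s) := div_μ(s) + div_ν(s) is C^∞(M)-linear, hence defines a section tr ad of E*; moreover d_E(tr ad) = 0, and changing μ to e^v μ and ν to e^w ν changes tr ad by the exact form d_E(v + w). Hence the modular class [tr ad] ∈ H¹_E(M) is well defined. -/
import Mathlib

/-- for a Lie algebroid (Lie–Rinehart algebra) with a positive
density `μ` on the base and a positive `E`-density `ν` — modeled by divergence
maps `div_μ`, `div_ν` with their characteristic properties — the map
`s ↦ tr ad(s) = div_μ(s) + div_ν(s)` is `R`-linear (hence a section of `E*`),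
is a `d_E`-cocycle, and changing `μ ↦ e^v μ`, `ν ↦ e^w ν` changes it by the
exact form `d_E(v + w)`; hence the modular class `[tr ad] ∈ H¹_E(M)` is well
defined. -/
theorem stmt16 (R E : Type*) [CommRing R] [LieRing E] [Module R E]
    (ρ : E → R → R)
    (hρaddR : ∀ (s : E) (u v : R), ρ s (u + v) = ρ s u + ρ s v)
    (divμ divν : E → R)
    (hμadd : ∀ s t : E, divμ (s + t) = divμ s + divμ t)
    (hνadd : ∀ s t : E, divν (s + t) = divν s + divν t)
    (hμsmul : ∀ (u : R) (s : E), divμ (u • s) = u * divμ s + ρ s u)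
    (hνsmul : ∀ (u : R) (s : E), divν (u • s) = u * divν s - ρ s u)
    (hμbr : ∀ s t : E, divμ ⁅s, t⁆ = ρ s (divμ t) - ρ t (divμ s))
    (hνbr : ∀ s t : E, divν ⁅s, t⁆ = ρ s (divν t) - ρ t (divν s)) :
    -- tr ad is R-linear (C^∞(M)-linear), hence a one-form
    (∀ (u : R) (s : E),
      divμ (u • s) + divν (u • s) = u * (divμ s + divν s)) ∧
    (∀ s t : E, divμ (s + t) + divν (s + t) =
      (divμ s + divν s) + (divμ t + divν t)) ∧
    -- d_E (tr ad) = 0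
    (∀ s t : E, ρ s (divμ t + divν t) - ρ t (divμ s + divν s)
      - (divμ ⁅s, t⁆ + divν ⁅s, t⁆) = 0) ∧
    -- gauging μ ↦ e^v μ, ν ↦ e^w ν shifts tr ad by the exact form d_E(v + w)
    (∀ (v w : R) (s : E),
      (divμ s + ρ s v) + (divν s + ρ s w)
        = (divμ s + divν s) + ρ s (v + w)) := by
  refine ⟨fun u s => by rw [hμsmul, hνsmul]; ring,
    fun s t => by rw [hμadd, hνadd]; ring,
    fun s t => by rw [hμbr, hνbr, hρaddR, hρaddR]; ring,
    fun v w s => by rw [hρaddR]; ring⟩
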